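/- Let p, q be coprime positive integers with 0 < p < q, and let S = { k/p + j/q : k, j integers, 0 < k < p, 0 < j < q }. Then 1 + (p+q)/(pq) is not an element of S. -/

import Mathlib

theorem stmt_1 (p q : ℕ) (hp : 0 < p) (hpq : p < q) (hco : Nat.Coprime p q) :
    1 + ((p : ℚ) + q) / ((p : ℚ) * q) ∉
      {x : ℚ | ∃ k j : ℕ, 0 < k ∧ k < p ∧ 0 < j ∧ j < q ∧
        x = (k : ℚ) / p + (j : ℚ) / q} := by
  rintro ⟨k, j, hk0, hkp, hj0, hjq, heq⟩
  have hq0 : 0 < q := hp.trans hpq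
  have hp' : (p:ℚ) ≠ 0 := by positivity
  have hq' : (q:ℚ) ≠ 0 := by positivity
  field_simp at heq
  have hnat : p * q + ((p:ℤ) + q) = k * q + j * p := by have h : (p:ℤ) * q + ((p:ℤ) + q) = q * k + p * j := (by exact_mod_cast heq); linarith
  -- q*(k-1) + p*(j-1) = p*q
  have hdvd : (p:ℤ) ∣ q * ((k:ℤ) - 1) := ⟨(q:ℤ) - (j:ℤ) + 1, by ring_nf; linarith⟩
  have hco' : IsCoprime (p:ℤ) (q:ℤ) := Int.isCoprime_iff_gcd_eq_one.mpr hco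
  have hdk : (p:ℤ) ∣ ((k:ℤ) - 1) := hco'.dvd_of_dvd_mul_left hdvd
  have hk1 : (k:ℤ) = 1 := by
    have := Int.eq_zero_of_dvd_of_natAbs_lt_natAbs hdk (by omega)
    omega
  have hpz : (p:ℤ) ≠ 0 := by exact_mod_cast hp.ne'
  have hj1 : (j:ℤ) = q + 1 := by
    have h2 : (j:ℤ) * p = ((q:ℤ) + 1) * p := by rw [hk1] at hnat; ring_nf; ring_nf at hnat; linarith
    exact mul_right_cancel₀ hpz h2
  omega
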